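/- A subgroup H of a countable group G is quasi-normal in G if and only if the coset space G/H admits a proper G-invariant metric. -/

import Mathlib

/-- `d` is a metric (as a two-variable real function). -/
def IsMetricFun {X : Type*} (d : X → X → ℝ) : Prop :=
  (∀ x y : X, d x y = 0 ↔ x = y) ∧ (∀ x y : X, d x y = d y x) ∧
    (∀ x y z : X, d x z ≤ d x y + d y z)

/-- A subgroup `H` of a group `G` is quasi-normal: for every `x ∈ G` there is a finite
set `F ⊆ G` with `x⁻¹Hx ⊆ F·H`. -/
def QuasiNormal {G : Type*} [Group G] (H : Subgroup G) : Prop :=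
  ∀ x : G, ∃ F : Finset G, ∀ h ∈ H, ∃ f ∈ F, ∃ h' ∈ H, x⁻¹ * h * x = f * h'

namespace QNAux

variable {G : Type} [Group G]

/-- The set of products `h₀ t₁ h₁ t₂ ⋯ tₙ hₙ` with `hᵢ ∈ H` and `tᵢ` the letters of `L`. -/
def P (H : Subgroup G) : List G → Set G
  | [] => (H : Set G)
  | t :: L => {x | ∃ h ∈ H, ∃ y ∈ P H L, x = h * t * y}

variable (H : Subgroup G)

lemma P_mul_left {h g : G} (hh : h ∈ H) {L : List G} (hg : g ∈ P H L) :
    h * g ∈ P H L := by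
  cases L with
  | nil => exact H.mul_mem hh hg
  | cons t L =>
    obtain ⟨h', hh', y, hy, rfl⟩ := hg
    exact ⟨h * h', H.mul_mem hh hh', y, hy, by group⟩

lemma P_mul_right {g h : G} (hh : h ∈ H) {L : List G} (hg : g ∈ P H L) :
    g * h ∈ P H L := by
  induction L generalizing g with
  | nil => exact H.mul_mem hg hh
  | cons t L ih =>
    obtain ⟨h', hh', y, hy, rfl⟩ := hg
    exact ⟨h', hh', y * h, ih hy, by group⟩

lemma P_append {a b : G} {L₁ L₂ : List G} (ha : a ∈ P H L₁) (hb : b ∈ P H L₂) :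
    a * b ∈ P H (L₁ ++ L₂) := by
  induction L₁ generalizing a with
  | nil => simpa using P_mul_left H ha hb
  | cons t L ih =>
    obtain ⟨h, hh, y, hy, rfl⟩ := ha
    exact ⟨h, hh, y * b, ih hy, by group⟩

lemma P_single {t : G} : t ∈ P H [t] :=
  ⟨1, H.one_mem, 1, H.one_mem, by group⟩

lemma P_inv {g : G} {L : List G} (hg : g ∈ P H L) :
    g⁻¹ ∈ P H ((L.map (·⁻¹)).reverse) := by
  induction L generalizing g with
  | nil => exact H.inv_mem hg
  | cons t L ih =>
    obtain ⟨h, hh, y, hy, rfl⟩ := hg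
    have h1 := P_append H (ih hy) (P_single H (t := t⁻¹))
    have h2 := P_mul_right H (H.inv_mem hh) h1
    have heq : y⁻¹ * t⁻¹ * h⁻¹ = (h * t * y)⁻¹ := by group
    rw [heq] at h2
    simpa using h2

variable (W : G → ℕ)

/-- Weighted word length relative to `H`. -/
noncomputable def ell (g : G) : ℕ :=
  sInf {n | ∃ L : List G, g ∈ P H L ∧ (L.map W).sum = n}

lemma ell_spec (g : G) : ∃ L : List G, g ∈ P H L ∧ (L.map W).sum = ell H W g :=
  Nat.sInf_mem (⟨W g, [g], P_single H, by simp⟩ :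
    {n | ∃ L : List G, g ∈ P H L ∧ (L.map W).sum = n}.Nonempty)

lemma ell_le {g : G} {n : ℕ} (h : ∃ L : List G, g ∈ P H L ∧ (L.map W).sum = n) :
    ell H W g ≤ n := Nat.sInf_le h

lemma ell_mul_left {h g : G} (hh : h ∈ H) : ell H W (h * g) = ell H W g := by
  apply le_antisymm
  · obtain ⟨L, hg, hs⟩ := ell_spec H W g
    exact ell_le H W ⟨L, P_mul_left H hh hg, hs⟩
  · obtain ⟨L, hg, hs⟩ := ell_spec H W (h * g)
    have := P_mul_left H (H.inv_mem hh) hg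
    rw [inv_mul_cancel_left] at this
    exact ell_le H W ⟨L, this, hs⟩

lemma ell_mul_right {h g : G} (hh : h ∈ H) : ell H W (g * h) = ell H W g := by
  apply le_antisymm
  · obtain ⟨L, hg, hs⟩ := ell_spec H W g
    exact ell_le H W ⟨L, P_mul_right H hh hg, hs⟩
  · obtain ⟨L, hg, hs⟩ := ell_spec H W (g * h)
    have := P_mul_right H (H.inv_mem hh) hg
    rw [mul_inv_cancel_right] at this
    exact ell_le H W ⟨L, this, hs⟩

lemma ell_inv (hW : ∀ g : G, W g⁻¹ = W g) (g : G) : ell H W g⁻¹ = ell H W g := by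
  have key : ∀ a : G, ell H W a⁻¹ ≤ ell H W a := by
    intro a
    obtain ⟨L, hg, hs⟩ := ell_spec H W a
    refine ell_le H W ⟨(L.map (·⁻¹)).reverse, P_inv H hg, ?_⟩
    rw [List.map_reverse, List.sum_reverse, List.map_map]
    rw [← hs]
    congr 1
    exact List.map_congr_left fun x _ => hW x
  refine le_antisymm (key g) ?_
  have := key g⁻¹
  rwa [inv_inv] at this

lemma ell_mul_le (a b : G) : ell H W (a * b) ≤ ell H W a + ell H W b := by
  obtain ⟨L₁, ha, hs₁⟩ := ell_spec H W a
  obtain ⟨L₂, hb, hs₂⟩ := ell_spec H W b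
  refine ell_le H W ⟨L₁ ++ L₂, P_append H ha hb, ?_⟩
  rw [List.map_append, List.sum_append, hs₁, hs₂]

lemma ell_eq_zero_iff (hW1 : ∀ g : G, 1 ≤ W g) (g : G) :
    ell H W g = 0 ↔ g ∈ H := by
  constructor
  · intro h
    obtain ⟨L, hg, hs⟩ := ell_spec H W g
    rw [h] at hs
    cases L with
    | nil => exact hg
    | cons t L =>
      exfalso
      have : 1 ≤ W t := hW1 t
      simp only [List.map_cons, List.sum_cons] at hs
      omega
  · intro h
    exact Nat.le_zero.mp (ell_le H W ⟨[], h, by simp⟩)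

/-- Key covering lemma: products of bounded length with letters in a finite set lie in
finitely many left cosets of `H`, assuming quasi-normality. -/
lemma cover (hQ : QuasiNormal H) (T : Set G) (hT : T.Finite) (n : ℕ) :
    ∃ F : Set G, F.Finite ∧ ∀ L : List G, L.length ≤ n → (∀ s ∈ L, s ∈ T) →
      ∀ g ∈ P H L, ∃ f ∈ F, f⁻¹ * g ∈ H := by
  induction n with
  | zero =>
    refine ⟨{1}, Set.finite_singleton 1, ?_⟩
    intro L hL _ g hg
    have hL0 : L = [] := List.length_eq_zero_iff.mp (Nat.le_zero.mp hL)
    subst hL0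
    exact ⟨1, rfl, by simpa using (show g ∈ H from hg)⟩
  | succ n ih =>
    obtain ⟨F, hF, hFP⟩ := ih
    choose Fc hFc using hQ
    refine ⟨F ∪ ⋃ t ∈ T, ⋃ f ∈ F, (fun f' => t * f * f') '' (Fc (t * f) : Set G),
      hF.union (hT.biUnion fun t _ => hF.biUnion fun f _ =>
        ((Fc (t * f)).finite_toSet).image _), ?_⟩
    intro L hL hLT g hg
    cases L with
    | nil =>
      obtain ⟨f, hf, hfg⟩ := hFP [] (by simp) (by simp) g hg
      exact ⟨f, Or.inl hf, hfg⟩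
    | cons t L' =>
      obtain ⟨h, hh, y, hy, rfl⟩ := hg
      obtain ⟨f, hf, hfy⟩ := hFP L' (by simpa using Nat.succ_le_succ_iff.mp hL)
        (fun s hs => hLT s (List.mem_cons_of_mem t hs)) y hy
      obtain ⟨f', hf', h', hh', heq⟩ := hFc (t * f) h hh
      refine ⟨t * f * f', Or.inr ?_, ?_⟩
      · exact Set.mem_biUnion (hLT t List.mem_cons_self)
          (Set.mem_biUnion hf ⟨f', Finset.mem_coe.mpr hf', rfl⟩)
      · have hh2 : h = t * f * (f' * h') * (t * f)⁻¹ := by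
          rw [← heq]; group
        have : (t * f * f')⁻¹ * (h * t * y) = h' * (f⁻¹ * y) := by
          rw [hh2]; group
        rw [this]
        exact H.mul_mem hh' hfy

end QNAux

open QNAux in
/-- A subgroup `H` of a countable group `G` is quasi-normal iff the coset space `G ⧸ H`
admits a proper `G`-invariant metric. -/
theorem quasiNormal_iff_exists_proper_invariant_metric
    (G : Type) [Group G] [Countable G] (H : Subgroup G) :
    QuasiNormal H ↔
      ∃ d : G ⧸ H → G ⧸ H → ℝ, IsMetricFun d ∧
        (∀ (g : G) (u v : G ⧸ H), d (g • u) (g • v) = d u v) ∧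
        (∀ (u : G ⧸ H) (r : ℝ), {v : G ⧸ H | d u v ≤ r}.Finite) := by
  constructor
  · intro hQ
    obtain ⟨enc, hinj⟩ := Countable.exists_injective_nat G
    set W : G → ℕ := fun g => min (enc g) (enc g⁻¹) + 1 with hWdef
    have hW1 : ∀ g : G, 1 ≤ W g := fun g => Nat.succ_le_succ (Nat.zero_le _)
    have hWinv : ∀ g : G, W g⁻¹ = W g := by
      intro g; simp [hWdef, inv_inv, Nat.min_comm]
    -- ell is constant on double cosets
    have hcoset : ∀ x x' y y' : G, (QuotientGroup.mk x : G ⧸ H) = QuotientGroup.mk x' →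
        (QuotientGroup.mk y : G ⧸ H) = QuotientGroup.mk y' →
        ell H W (x⁻¹ * y) = ell H W (x'⁻¹ * y') := by
      intro x x' y y' hx hy
      have h1 : x⁻¹ * x' ∈ H := QuotientGroup.eq.mp hx
      have h2 : y⁻¹ * y' ∈ H := QuotientGroup.eq.mp hy
      have e1 : x'⁻¹ * y' = (x⁻¹ * x')⁻¹ * (x⁻¹ * y) * (y⁻¹ * y') := by group
      rw [e1, ell_mul_right H W h2, ell_mul_left H W (H.inv_mem h1)]
    refine ⟨fun u v => ((ell H W ((Quotient.out u)⁻¹ * Quotient.out v) : ℕ) : ℝ),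
      ⟨?_, ?_, ?_⟩, ?_, ?_⟩
    · -- zero iff equal
      intro u v
      rw [show ((ell H W ((Quotient.out u)⁻¹ * Quotient.out v) : ℕ) : ℝ) = 0 ↔
          ell H W ((Quotient.out u)⁻¹ * Quotient.out v) = 0 by exact_mod_cast Iff.rfl]
      rw [ell_eq_zero_iff H W hW1]
      rw [← QuotientGroup.eq]
      rw [QuotientGroup.out_eq', QuotientGroup.out_eq']
    · -- symmetry
      intro u v
      dsimp only
      have : (Quotient.out v)⁻¹ * Quotient.out u =
          ((Quotient.out u)⁻¹ * Quotient.out v)⁻¹ := by group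
      rw [this, ell_inv H W hWinv]
    · -- triangle
      intro u v w
      dsimp only
      have e : (Quotient.out u)⁻¹ * Quotient.out w =
          ((Quotient.out u)⁻¹ * Quotient.out v) * ((Quotient.out v)⁻¹ * Quotient.out w) := by
        group
      rw [e]
      exact_mod_cast ell_mul_le H W _ _
    · -- invariance
      intro g u v
      dsimp only
      have hu : (QuotientGroup.mk (Quotient.out (g • u)) : G ⧸ H) =
          QuotientGroup.mk (g * Quotient.out u) := by
        rw [QuotientGroup.out_eq']
        exact congrArg (g • ·) (QuotientGroup.out_eq' u).symm
      have hv : (QuotientGroup.mk (Quotient.out (g • v)) : G ⧸ H) =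
          QuotientGroup.mk (g * Quotient.out v) := by
        rw [QuotientGroup.out_eq']
        exact congrArg (g • ·) (QuotientGroup.out_eq' v).symm
      have := hcoset _ _ _ _ hu hv
      rw [this]
      congr 2
      group
    · -- properness
      intro u r
      dsimp only
      set N : ℕ := ⌊r⌋₊ with hN
      -- finite alphabet
      have hTfin : {s : G | W s ≤ N}.Finite := by
        have h1 : {s : G | enc s ≤ N}.Finite := by
          have : {s : G | enc s ≤ N} ⊆ enc ⁻¹' (Set.Iic N) := fun s hs => hs
          exact Set.Finite.subset ((Set.finite_Iic N).preimage (hinj.injOn)) this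
        have h2 : {s : G | enc s⁻¹ ≤ N}.Finite := by
          have : {s : G | enc s⁻¹ ≤ N} ⊆ (fun s : G => s⁻¹) ⁻¹' {s : G | enc s ≤ N} :=
            fun s hs => hs
          exact Set.Finite.subset (h1.preimage (fun a _ b _ h => by
            simpa using congrArg (·⁻¹) h)) this
        refine Set.Finite.subset (h1.union h2) ?_
        intro s hs
        simp only [Set.mem_setOf_eq, hWdef] at hs
        have hmin : min (enc s) (enc s⁻¹) ≤ N := by omega
        rcases min_le_iff.mp hmin with h | h
        · exact Or.inl h
        · exact Or.inr h
      obtain ⟨F, hF, hFP⟩ := cover H hQ {s : G | W s ≤ N} hTfin N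
      refine Set.Finite.subset (hF.image fun f => (QuotientGroup.mk (Quotient.out u * f) : G ⧸ H)) ?_
      intro v hv
      simp only [Set.mem_setOf_eq] at hv
      have hvN : ell H W ((Quotient.out u)⁻¹ * Quotient.out v) ≤ N := Nat.le_floor hv
      obtain ⟨L, hgL, hsum⟩ := ell_spec H W ((Quotient.out u)⁻¹ * Quotient.out v)
      have hlen : L.length ≤ N := by
        have h1 : L.length ≤ (L.map W).sum := by
          have := List.length_le_sum_of_one_le (L.map W) (by
            intro i hi
            obtain ⟨x, _, rfl⟩ := List.mem_map.mp hi
            exact hW1 x)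
          simpa using this
        omega
      have hlet : ∀ s ∈ L, s ∈ {s : G | W s ≤ N} := by
        intro s hs
        have : W s ≤ (L.map W).sum :=
          List.single_le_sum (fun x _ => Nat.zero_le x) _ (List.mem_map_of_mem (f := W) hs)
        simp only [Set.mem_setOf_eq]
        omega
      obtain ⟨f, hf, hfg⟩ := hFP L hlen hlet _ hgL
      refine ⟨f, hf, ?_⟩
      dsimp only
      have : (QuotientGroup.mk (Quotient.out u * f) : G ⧸ H) = QuotientGroup.mk (Quotient.out v) := by
        rw [QuotientGroup.eq]
        have e : (Quotient.out u * f)⁻¹ * Quotient.out v =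
            f⁻¹ * ((Quotient.out u)⁻¹ * Quotient.out v) := by group
        rw [e]; exact hfg
      rw [this, QuotientGroup.out_eq']
  · rintro ⟨d, ⟨hzero, hsymm, htri⟩, hinv, hproper⟩
    classical
    intro x
    set r : ℝ := d (QuotientGroup.mk 1) (QuotientGroup.mk x⁻¹) +
      d (QuotientGroup.mk 1) (QuotientGroup.mk x) with hr
    have hball := hproper (QuotientGroup.mk 1 : G ⧸ H) r
    refine ⟨hball.toFinset.image Quotient.out, ?_⟩
    intro h hh
    have hmem : (QuotientGroup.mk (x⁻¹ * h * x) : G ⧸ H) ∈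
        {v : G ⧸ H | d (QuotientGroup.mk 1) v ≤ r} := by
      simp only [Set.mem_setOf_eq]
      calc d (QuotientGroup.mk 1) (QuotientGroup.mk (x⁻¹ * h * x))
          ≤ d (QuotientGroup.mk 1) (QuotientGroup.mk x⁻¹) +
            d (QuotientGroup.mk x⁻¹) (QuotientGroup.mk (x⁻¹ * h * x)) := htri _ _ _
        _ = r := by
            rw [hr]
            congr 1
            have p1 : (QuotientGroup.mk (x⁻¹ * h * x) : G ⧸ H) =
                x⁻¹ • QuotientGroup.mk (h * x) := by
              show _ = QuotientGroup.mk (x⁻¹ * (h * x))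
              rw [mul_assoc]
            have p2 : (QuotientGroup.mk x⁻¹ : G ⧸ H) = x⁻¹ • QuotientGroup.mk 1 := by
              show _ = QuotientGroup.mk (x⁻¹ * 1)
              rw [mul_one]
            rw [p1, p2, hinv]
            have p3 : (QuotientGroup.mk 1 : G ⧸ H) = h • QuotientGroup.mk h⁻¹ := by
              show _ = QuotientGroup.mk (h * h⁻¹)
              rw [mul_inv_cancel]
            have p4 : (QuotientGroup.mk (h * x) : G ⧸ H) = h • QuotientGroup.mk x := rfl
            calc d (QuotientGroup.mk 1 : G ⧸ H) (QuotientGroup.mk (h * x))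
                = d (h • (QuotientGroup.mk h⁻¹ : G ⧸ H)) (h • QuotientGroup.mk x) := by
                  rw [← p3, ← p4]
              _ = d (QuotientGroup.mk h⁻¹ : G ⧸ H) (QuotientGroup.mk x) := hinv _ _ _
              _ = d (QuotientGroup.mk 1 : G ⧸ H) (QuotientGroup.mk x) := by
                  congr 1
                  rw [QuotientGroup.eq]
                  simpa using hh
    set q : G ⧸ H := QuotientGroup.mk (x⁻¹ * h * x) with hq
    refine ⟨Quotient.out q, Finset.mem_image_of_mem _ (hball.mem_toFinset.mpr hmem),
      (Quotient.out q)⁻¹ * (x⁻¹ * h * x), ?_, by group⟩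
    rw [← QuotientGroup.eq, QuotientGroup.out_eq']
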